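/- Let q = 1 + (α+β)γ (the specialization δ = −γ of q = 1+βγ−αδ), and for each i set p_i := (1 − z_i)/(1 + (β/α) z_i). Then for any i ≠ j one has 1 + (α + β p_j)(γ − γ p_i)/(p_j − p_i) = (q z_i − z_j)/(z_i − z_j). -/

import Mathlib

noncomputable section

/-- the field of rational functions over ℚ in indeterminates α, β, γ, z_i, z_j -/
abbrev K5 : Type := FractionRing (MvPolynomial (Fin 5) ℚ)

def av : K5 := algebraMap (MvPolynomial (Fin 5) ℚ) K5 (MvPolynomial.X 0)
def bv : K5 := algebraMap (MvPolynomial (Fin 5) ℚ) K5 (MvPolynomial.X 1)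
def cv : K5 := algebraMap (MvPolynomial (Fin 5) ℚ) K5 (MvPolynomial.X 2)
def zi : K5 := algebraMap (MvPolynomial (Fin 5) ℚ) K5 (MvPolynomial.X 3)
def zj : K5 := algebraMap (MvPolynomial (Fin 5) ℚ) K5 (MvPolynomial.X 4)

/-- δ := −γ -/
def dv : K5 := -cv

/-- q := 1 + βγ − αδ = 1 + (α+β)γ -/
def qv : K5 := 1 + (av + bv) * cv

/-- p_i := (1 − z_i)/(1 + (β/α) z_i) -/
def pi' : K5 := (1 - zi) / (1 + bv / av * zi)
/-- p_j := (1 − z_j)/(1 + (β/α) z_j) -/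
def pj' : K5 := (1 - zj) / (1 + bv / av * zj)

lemma key (p : MvPolynomial (Fin 5) ℚ) (v : Fin 5 → ℚ)
    (h : MvPolynomial.eval v p ≠ 0) :
    algebraMap (MvPolynomial (Fin 5) ℚ) K5 p ≠ 0 := by
  have hp : p ≠ 0 := fun h0 => h (by simp [h0])
  intro h0
  exact hp ((map_eq_zero_iff _ (IsFractionRing.injective (MvPolynomial (Fin 5) ℚ) K5)).mp h0)

lemma ha : av ≠ 0 := key _ (fun _ => 1) (by simp)
lemma hab : av + bv ≠ 0 := by
  have := key (MvPolynomial.X 0 + MvPolynomial.X 1) (fun _ => 1) (by simp)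
  simpa [av, bv, map_add] using this
lemma hdi : av + bv * zi ≠ 0 := by
  have := key (MvPolynomial.X 0 + MvPolynomial.X 1 * MvPolynomial.X 3) (fun _ => 1) (by simp)
  simpa [av, bv, zi, map_add, map_mul] using this
lemma hdj : av + bv * zj ≠ 0 := by
  have := key (MvPolynomial.X 0 + MvPolynomial.X 1 * MvPolynomial.X 4) (fun _ => 1) (by simp)
  simpa [av, bv, zj, map_add, map_mul] using this
lemma hz : zi - zj ≠ 0 := by
  have := key (MvPolynomial.X 3 - MvPolynomial.X 4) (fun k => if k = 3 then 1 else 0) (by simp)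
  simpa [zi, zj, map_sub] using this

lemma hpi : pi' = av * (1 - zi) / (av + bv * zi) := by
  rw [pi', div_eq_div_iff]
  · field_simp [ha]
  · have : (1 : K5) + bv / av * zi = (av + bv * zi) / av := by field_simp [ha]
    rw [this]
    exact div_ne_zero hdi ha
  · exact hdi

lemma hpj : pj' = av * (1 - zj) / (av + bv * zj) := by
  rw [pj', div_eq_div_iff]
  · field_simp [ha]
  · have : (1 : K5) + bv / av * zj = (av + bv * zj) / av := by field_simp [ha]
    rw [this]
    exact div_ne_zero hdj ha
  · exact hdj

lemma hdiff : pj' - pi' = av * (av + bv) * (zi - zj) / ((av + bv * zi) * (av + bv * zj)) := by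
  rw [hpi, hpj, div_sub_div _ _ hdj hdi, div_eq_div_iff (mul_ne_zero hdj hdi)
    (mul_ne_zero hdi hdj)]
  ring

lemma hdne : pj' - pi' ≠ 0 := by
  rw [hdiff]
  exact div_ne_zero (mul_ne_zero (mul_ne_zero ha hab) hz) (mul_ne_zero hdi hdj)

/-- 1 + (α + βp_j)(γ + δp_i)/(p_j − p_i) = (qz_i − z_j)/(z_i − z_j). -/
theorem stmt11 :
    1 + (av + bv * pj') * (cv + dv * pi') / (pj' - pi') =
      (qv * zi - zj) / (zi - zj) := by
  have h := hdne
  rw [hdiff] at h ⊢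
  rw [hpi, hpj, dv, qv]
  rw [div_ne_zero_iff] at h
  rw [div_div_eq_mul_div]
  field_simp [ha, hdi, hdj, hz, h.1, hab]
  ring

end
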